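/- For all integers j, k ≥ 0, the Poisson bracket satisfies {tr A^j B^k, tr(AB)} = (j − k) · tr(A^j B^k) identically on M_n(ℂ) × M_n(ℂ). -/

import Mathlib

open MvPolynomial Matrix

/-- Polynomial functions on `M_n(ℂ) × M_n(ℂ)`, represented as polynomials in the
entries of the two matrices. -/
abbrev PolyFun (n : ℕ) := MvPolynomial ((Fin n × Fin n) ⊕ (Fin n × Fin n)) ℂ

/-- The matrix of coordinate functions `X_{jk}`. -/
noncomputable def Xmat (n : ℕ) : Matrix (Fin n) (Fin n) (PolyFun n) :=
  fun i j => MvPolynomial.X (Sum.inl (i, j))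

/-- The matrix of coordinate functions `Y_{jk}`. -/
noncomputable def Ymat (n : ℕ) : Matrix (Fin n) (Fin n) (PolyFun n) :=
  fun i j => MvPolynomial.X (Sum.inr (i, j))

/-- Traceless part `A = X - (tr X / n) I_n`. -/
noncomputable def Amat (n : ℕ) : Matrix (Fin n) (Fin n) (PolyFun n) :=
  Xmat n - (MvPolynomial.C ((n : ℂ)⁻¹) * Matrix.trace (Xmat n)) • (1 : Matrix (Fin n) (Fin n) (PolyFun n))

/-- Traceless part `B = Y - (tr Y / n) I_n`. -/
noncomputable def Bmat (n : ℕ) : Matrix (Fin n) (Fin n) (PolyFun n) :=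
  Ymat n - (MvPolynomial.C ((n : ℂ)⁻¹) * Matrix.trace (Ymat n)) • (1 : Matrix (Fin n) (Fin n) (PolyFun n))

/-- The polynomial function `(X,Y) ↦ tr (A^p B^q)`. -/
noncomputable def trAB (n p q : ℕ) : PolyFun n :=
  Matrix.trace (Amat n ^ p * Bmat n ^ q)

/-- The polynomial function `(X,Y) ↦ tr (X^a Y^b)`. -/
noncomputable def trXY (n a b : ℕ) : PolyFun n :=
  Matrix.trace (Xmat n ^ a * Ymat n ^ b)

/-- The Poisson bracket
`{F,G} = Σ_{j,k} ∂F/∂X_{jk} ∂G/∂Y_{kj} − ∂F/∂Y_{jk} ∂G/∂X_{kj}`. -/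
noncomputable def pbracket {n : ℕ} (F G : PolyFun n) : PolyFun n :=
  ∑ j : Fin n, ∑ k : Fin n,
    (MvPolynomial.pderiv (Sum.inl (j, k)) F * MvPolynomial.pderiv (Sum.inr (k, j)) G
      - MvPolynomial.pderiv (Sum.inr (j, k)) F * MvPolynomial.pderiv (Sum.inl (k, j)) G)

/-- Evaluation of a polynomial function at a pair of matrices. -/
noncomputable def evalP {n : ℕ} (X Y : Matrix (Fin n) (Fin n) ℂ) (F : PolyFun n) : ℂ :=
  MvPolynomial.eval (Sum.elim (fun p => X p.1 p.2) (fun p => Y p.1 p.2)) F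

/-- The Calogero–Moser variety `Ĉ_n = {(X,Y) : rank([X,Y] − i I_n) = 1}`. -/
def Chat (n : ℕ) : Set (Matrix (Fin n) (Fin n) ℂ × Matrix (Fin n) (Fin n) ℂ) :=
  {P | ((P.1 * P.2 - P.2 * P.1) - Complex.I • (1 : Matrix (Fin n) (Fin n) ℂ)).rank = 1}

/-- The traceless Calogero–Moser variety
`Ŝ_n = {(X,Y) : tr X = tr Y = 0, rank([X,Y] − i I_n) = 1}`. -/
def Shat (n : ℕ) : Set (Matrix (Fin n) (Fin n) ℂ × Matrix (Fin n) (Fin n) ℂ) :=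
  {P | Matrix.trace P.1 = 0 ∧ Matrix.trace P.2 = 0 ∧
    ((P.1 * P.2 - P.2 * P.1) - Complex.I • (1 : Matrix (Fin n) (Fin n) ℂ)).rank = 1}

/-- The set `ℱ = {tr A², tr B², tr A³, (tr AB)²}`. -/
noncomputable def calF (n : ℕ) : Set (PolyFun n) :=
  {trAB n 2 0, trAB n 0 2, trAB n 3 0, (trAB n 1 1) ^ 2}

/-- The smallest ℂ-linear subspace of the polynomial functions containing `S`
and closed under the Poisson bracket. -/
inductive LieGen (n : ℕ) (S : Set (PolyFun n)) : PolyFun n → Prop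
  | base {f : PolyFun n} : f ∈ S → LieGen n S f
  | zero : LieGen n S 0
  | add {f g : PolyFun n} : LieGen n S f → LieGen n S g → LieGen n S (f + g)
  | smul (c : ℂ) {f : PolyFun n} : LieGen n S f → LieGen n S (c • f)
  | bracket {f g : PolyFun n} : LieGen n S f → LieGen n S g → LieGen n S (pbracket f g)

namespace Stmt3Aux

open Finset

variable {n : ℕ}

/-- Entrywise partial derivative of a matrix of polynomials. -/
noncomputable def mder (v : (Fin n × Fin n) ⊕ (Fin n × Fin n))
    (M : Matrix (Fin n) (Fin n) (PolyFun n)) : Matrix (Fin n) (Fin n) (PolyFun n) :=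
  fun i j => MvPolynomial.pderiv v (M i j)

lemma mder_mul (v : (Fin n × Fin n) ⊕ (Fin n × Fin n))
    (M N : Matrix (Fin n) (Fin n) (PolyFun n)) :
    mder v (M * N) = mder v M * N + M * mder v N := by
  refine Matrix.ext fun i j => ?_
  simp only [mder, Matrix.add_apply, Matrix.mul_apply]
  refine (map_sum (MvPolynomial.pderiv v) (fun t => M i t * N t j) Finset.univ).trans ?_
  refine Eq.trans (Finset.sum_congr rfl fun t _ => ?_) Finset.sum_add_distrib
  rw [Derivation.leibniz, smul_eq_mul, smul_eq_mul]
  ring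

lemma mder_one (v : (Fin n × Fin n) ⊕ (Fin n × Fin n)) :
    mder v (1 : Matrix (Fin n) (Fin n) (PolyFun n)) = 0 := by
  ext i j
  simp [mder, Matrix.one_apply, apply_ite (MvPolynomial.pderiv v)]

lemma mder_pow (v : (Fin n × Fin n) ⊕ (Fin n × Fin n))
    (M : Matrix (Fin n) (Fin n) (PolyFun n)) (p : ℕ) :
    mder v (M ^ p) = ∑ i ∈ Finset.range p, M ^ i * mder v M * M ^ (p - 1 - i) := by
  induction p with
  | zero => simpa [pow_zero] using mder_one v
  | succ p ih =>
    rw [pow_succ, mder_mul, ih, Finset.sum_mul, Finset.sum_range_succ]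
    refine congrArg₂ (· + ·) ?_ ?_
    · refine Finset.sum_congr rfl fun i hi => ?_
      rw [Finset.mem_range] at hi
      rw [mul_assoc, ← pow_succ]
      congr 2
      omega
    · simp

lemma mder_pow_eq_zero {v : (Fin n × Fin n) ⊕ (Fin n × Fin n)}
    {M : Matrix (Fin n) (Fin n) (PolyFun n)} (h : mder v M = 0) (p : ℕ) :
    mder v (M ^ p) = 0 := by
  rw [mder_pow, ]
  refine Finset.sum_eq_zero fun i _ => ?_
  rw [h, mul_zero, zero_mul]

lemma pderiv_trace (v : (Fin n × Fin n) ⊕ (Fin n × Fin n))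
    (M : Matrix (Fin n) (Fin n) (PolyFun n)) :
    MvPolynomial.pderiv v (Matrix.trace M) = Matrix.trace (mder v M) := by
  simp [Matrix.trace, Matrix.diag, mder, map_sum]

lemma mder_X_inl (a b : Fin n) :
    mder (Sum.inl (a, b)) (Xmat n) = Matrix.single a b 1 := by
  ext i j
  simp only [mder, Xmat, MvPolynomial.pderiv_X, Matrix.single, Matrix.of_apply,
    Pi.single_apply]
  by_cases h : a = i ∧ b = j
  · obtain ⟨rfl, rfl⟩ := h; simp
  · rw [if_neg h, if_neg]
    intro he
    apply h
    injection he with he'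
    exact ⟨(Prod.ext_iff.1 he'.symm).1, (Prod.ext_iff.1 he'.symm).2⟩

lemma mder_X_inr (v : Fin n × Fin n) : mder (Sum.inr v) (Xmat n) = 0 := by
  ext i j
  simp [mder, Xmat]

lemma mder_Y_inr (a b : Fin n) :
    mder (Sum.inr (a, b)) (Ymat n) = Matrix.single a b 1 := by
  ext i j
  simp only [mder, Ymat, MvPolynomial.pderiv_X, Matrix.single, Matrix.of_apply,
    Pi.single_apply]
  by_cases h : a = i ∧ b = j
  · obtain ⟨rfl, rfl⟩ := h; simp
  · rw [if_neg h, if_neg]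
    intro he
    apply h
    injection he with he'
    exact ⟨(Prod.ext_iff.1 he'.symm).1, (Prod.ext_iff.1 he'.symm).2⟩

lemma mder_Y_inl (v : Fin n × Fin n) : mder (Sum.inl v) (Ymat n) = 0 := by
  ext i j
  simp [mder, Ymat]

lemma mder_sub_smul_one (v : (Fin n × Fin n) ⊕ (Fin n × Fin n))
    (M : Matrix (Fin n) (Fin n) (PolyFun n)) (s : PolyFun n) :
    mder v (M - s • (1 : Matrix (Fin n) (Fin n) (PolyFun n)))
      = mder v M - (MvPolynomial.pderiv v s) • (1 : Matrix (Fin n) (Fin n) (PolyFun n)) := by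
  ext i j
  simp only [mder, Matrix.sub_apply, Matrix.smul_apply, map_sub, smul_eq_mul, Matrix.one_apply]
  split_ifs <;> simp

lemma pderiv_trace_X_inl (a b : Fin n) :
    MvPolynomial.pderiv (Sum.inl (a, b)) (Matrix.trace (Xmat n))
      = (1 : Matrix (Fin n) (Fin n) (PolyFun n)) a b := by
  rw [pderiv_trace, mder_X_inl]
  rcases eq_or_ne a b with rfl | h
  · simp [Matrix.trace_single_eq_same, Matrix.one_apply]
  · rw [Matrix.trace_single_eq_of_ne _ _ _ h, Matrix.one_apply_ne h]

lemma pderiv_trace_Y_inr (a b : Fin n) :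
    MvPolynomial.pderiv (Sum.inr (a, b)) (Matrix.trace (Ymat n))
      = (1 : Matrix (Fin n) (Fin n) (PolyFun n)) a b := by
  rw [pderiv_trace, mder_Y_inr]
  rcases eq_or_ne a b with rfl | h
  · simp [Matrix.trace_single_eq_same, Matrix.one_apply]
  · rw [Matrix.trace_single_eq_of_ne _ _ _ h, Matrix.one_apply_ne h]

lemma mder_A_inl (a b : Fin n) :
    mder (Sum.inl (a, b)) (Amat n)
      = Matrix.single a b 1
        - (MvPolynomial.C ((n : ℂ)⁻¹) * (1 : Matrix (Fin n) (Fin n) (PolyFun n)) a b) •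
            (1 : Matrix (Fin n) (Fin n) (PolyFun n)) := by
  rw [Amat, mder_sub_smul_one, mder_X_inl, MvPolynomial.pderiv_C_mul, pderiv_trace_X_inl]

lemma mder_A_inr (v : Fin n × Fin n) : mder (Sum.inr v) (Amat n) = 0 := by
  rw [Amat, mder_sub_smul_one, mder_X_inr, MvPolynomial.pderiv_C_mul]
  have : MvPolynomial.pderiv (Sum.inr v) (Matrix.trace (Xmat n)) = 0 := by
    rw [pderiv_trace, mder_X_inr, Matrix.trace_zero]
  rw [this, mul_zero, zero_smul, sub_zero]

lemma mder_B_inr (a b : Fin n) :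
    mder (Sum.inr (a, b)) (Bmat n)
      = Matrix.single a b 1
        - (MvPolynomial.C ((n : ℂ)⁻¹) * (1 : Matrix (Fin n) (Fin n) (PolyFun n)) a b) •
            (1 : Matrix (Fin n) (Fin n) (PolyFun n)) := by
  rw [Bmat, mder_sub_smul_one, mder_Y_inr, MvPolynomial.pderiv_C_mul, pderiv_trace_Y_inr]

lemma mder_B_inl (v : Fin n × Fin n) : mder (Sum.inl v) (Bmat n) = 0 := by
  rw [Bmat, mder_sub_smul_one, mder_Y_inl, MvPolynomial.pderiv_C_mul]
  have : MvPolynomial.pderiv (Sum.inl v) (Matrix.trace (Ymat n)) = 0 := by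
    rw [pderiv_trace, mder_Y_inl, Matrix.trace_zero]
  rw [this, mul_zero, zero_smul, sub_zero]

lemma cast_n_eq : ((Fintype.card (Fin n) : ℕ) : PolyFun n) = MvPolynomial.C ((n : ℂ)) := by
  rw [Fintype.card_fin]
  exact (map_natCast MvPolynomial.C n).symm

lemma trace_Amat (hn : 1 ≤ n) : Matrix.trace (Amat n) = 0 := by
  have hn' : ((n : ℂ)) ≠ 0 := Nat.cast_ne_zero.mpr (by omega)
  rw [Amat, Matrix.trace_sub, Matrix.trace_smul, Matrix.trace_one, smul_eq_mul, mul_assoc,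
    mul_comm (Matrix.trace (Xmat n)), ← mul_assoc, cast_n_eq, ← MvPolynomial.C_mul,
    inv_mul_cancel₀ hn', MvPolynomial.C_1, one_mul, sub_self]

lemma trace_Bmat (hn : 1 ≤ n) : Matrix.trace (Bmat n) = 0 := by
  have hn' : ((n : ℂ)) ≠ 0 := Nat.cast_ne_zero.mpr (by omega)
  rw [Bmat, Matrix.trace_sub, Matrix.trace_smul, Matrix.trace_one, smul_eq_mul, mul_assoc,
    mul_comm (Matrix.trace (Ymat n)), ← mul_assoc, cast_n_eq, ← MvPolynomial.C_mul,
    inv_mul_cancel₀ hn', MvPolynomial.C_1, one_mul, sub_self]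

lemma trace_mul_single (N : Matrix (Fin n) (Fin n) (PolyFun n)) (a b : Fin n) :
    Matrix.trace (N * Matrix.single a b (1 : PolyFun n)) = N b a := by
  simp only [Matrix.trace, Matrix.diag, Matrix.mul_apply, Matrix.single,
    Matrix.of_apply, mul_ite, mul_one, mul_zero]
  rw [Finset.sum_comm]
  rw [Finset.sum_eq_single a]
  · rw [Finset.sum_eq_single b]
    · simp
    · intro c _ hc; rw [if_neg (by tauto)]
    · intro h; exact absurd (Finset.mem_univ b) h
  · intro c _ hc
    refine Finset.sum_eq_zero fun d _ => ?_
    rw [if_neg (by tauto)]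
  · intro h; exact absurd (Finset.mem_univ a) h

lemma sum_sum_range_comm {β : Type*} [AddCommMonoid β] (p : ℕ) (f : ℕ → Fin n → Fin n → β) :
    ∑ a : Fin n, ∑ b : Fin n, ∑ i ∈ Finset.range p, f i a b
      = ∑ i ∈ Finset.range p, ∑ a : Fin n, ∑ b : Fin n, f i a b :=
  (Finset.sum_congr rfl fun _ _ => Finset.sum_comm).trans Finset.sum_comm

/-- The core summation identity. -/
lemma sum_core (P Q M : Matrix (Fin n) (Fin n) (PolyFun n)) (hM : Matrix.trace M = 0)
    (x : PolyFun n) :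
    ∑ a : Fin n, ∑ b : Fin n,
      Matrix.trace (P * (Matrix.single a b 1
          - (x * (1 : Matrix (Fin n) (Fin n) (PolyFun n)) a b) •
              (1 : Matrix (Fin n) (Fin n) (PolyFun n))) * Q) * M a b
      = Matrix.trace (Q * P * M) := by
  have key : ∀ a b : Fin n,
      Matrix.trace (P * (Matrix.single a b 1
          - (x * (1 : Matrix (Fin n) (Fin n) (PolyFun n)) a b) •
              (1 : Matrix (Fin n) (Fin n) (PolyFun n))) * Q)
        = (Q * P) b a - x * (1 : Matrix (Fin n) (Fin n) (PolyFun n)) a b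
            * Matrix.trace (P * Q) := by
    intro a b
    rw [Matrix.mul_sub, Matrix.sub_mul, Matrix.trace_sub]
    congr 1
    · rw [Matrix.trace_mul_cycle, trace_mul_single]
    · rw [Matrix.mul_smul, Matrix.smul_mul, Matrix.mul_one, Matrix.trace_smul, smul_eq_mul]
  calc ∑ a : Fin n, ∑ b : Fin n,
      Matrix.trace (P * (Matrix.single a b 1
          - (x * (1 : Matrix (Fin n) (Fin n) (PolyFun n)) a b) •
              (1 : Matrix (Fin n) (Fin n) (PolyFun n))) * Q) * M a b
      = ∑ a : Fin n, ∑ b : Fin n, ((Q * P) b a * M a b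
          - x * (1 : Matrix (Fin n) (Fin n) (PolyFun n)) a b * Matrix.trace (P * Q) * M a b) := by
        refine Finset.sum_congr rfl fun a _ => Finset.sum_congr rfl fun b _ => ?_
        rw [key a b, sub_mul]
    _ = Matrix.trace (Q * P * M) := by
        rw [Finset.sum_congr rfl fun a (_ : a ∈ Finset.univ) => Finset.sum_sub_distrib _ _,
          Finset.sum_sub_distrib]
        have h1 : ∑ a : Fin n, ∑ b : Fin n, (Q * P) b a * M a b = Matrix.trace (Q * P * M) := by
          rw [Finset.sum_comm]
          simp only [Matrix.trace, Matrix.diag, Matrix.mul_apply]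
        have h2 : ∑ a : Fin n, ∑ b : Fin n,
            x * (1 : Matrix (Fin n) (Fin n) (PolyFun n)) a b * Matrix.trace (P * Q) * M a b
              = 0 := by
          have : ∀ a : Fin n, ∑ b : Fin n,
              x * (1 : Matrix (Fin n) (Fin n) (PolyFun n)) a b * Matrix.trace (P * Q) * M a b
                = x * Matrix.trace (P * Q) * M a a := by
            intro a
            rw [Finset.sum_eq_single a]
            · simp [Matrix.one_apply]
            · intro c _ hc
              rw [Matrix.one_apply_ne (Ne.symm hc)]
              ring
            · intro h; exact absurd (Finset.mem_univ a) h
          rw [Finset.sum_congr rfl fun a _ => this a, ← Finset.mul_sum]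
          have : ∑ a : Fin n, M a a = Matrix.trace M := rfl
          rw [this, hM, mul_zero]
        rw [h1, h2, sub_zero]

/-- Derivative of `tr(A^p B^q)` in the `X`-direction, contracted with `A`. -/
lemma main_inl (hn : 1 ≤ n) (p q : ℕ) :
    ∑ a : Fin n, ∑ b : Fin n,
      MvPolynomial.pderiv (Sum.inl (a, b)) (Matrix.trace (Amat n ^ p * Bmat n ^ q))
        * Amat n a b
      = p • Matrix.trace (Amat n ^ p * Bmat n ^ q) := by
  have hder : ∀ a b : Fin n,
      MvPolynomial.pderiv (Sum.inl (a, b)) (Matrix.trace (Amat n ^ p * Bmat n ^ q))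
        = ∑ i ∈ Finset.range p,
            Matrix.trace (Amat n ^ i * (Matrix.single a b 1
              - (MvPolynomial.C ((n : ℂ)⁻¹) * (1 : Matrix (Fin n) (Fin n) (PolyFun n)) a b) •
                  (1 : Matrix (Fin n) (Fin n) (PolyFun n)))
              * (Amat n ^ (p - 1 - i) * Bmat n ^ q)) := by
    intro a b
    rw [pderiv_trace, mder_mul, mder_pow_eq_zero (mder_B_inl (a, b)) q, Matrix.mul_zero,
      add_zero, mder_pow, mder_A_inl, Finset.sum_mul, Matrix.trace_sum]
    refine Finset.sum_congr rfl fun i _ => ?_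
    rw [Matrix.mul_assoc]
  calc ∑ a : Fin n, ∑ b : Fin n,
      MvPolynomial.pderiv (Sum.inl (a, b)) (Matrix.trace (Amat n ^ p * Bmat n ^ q))
        * Amat n a b
      = ∑ i ∈ Finset.range p, ∑ a : Fin n, ∑ b : Fin n,
          Matrix.trace (Amat n ^ i * (Matrix.single a b 1
            - (MvPolynomial.C ((n : ℂ)⁻¹) * (1 : Matrix (Fin n) (Fin n) (PolyFun n)) a b) •
                (1 : Matrix (Fin n) (Fin n) (PolyFun n)))
            * (Amat n ^ (p - 1 - i) * Bmat n ^ q)) * Amat n a b := by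
        refine Eq.trans ?_ (sum_sum_range_comm _ _)
        refine Finset.sum_congr rfl fun a _ => Finset.sum_congr rfl fun b _ => ?_
        rw [hder a b, Finset.sum_mul]
    _ = ∑ i ∈ Finset.range p, Matrix.trace (Amat n ^ p * Bmat n ^ q) := by
        refine Finset.sum_congr rfl fun i hi => ?_
        rw [Finset.mem_range] at hi
        rw [sum_core _ _ _ (trace_Amat hn)]
        rw [Matrix.mul_assoc, ← pow_succ, Matrix.trace_mul_comm, ← Matrix.mul_assoc, ← pow_add,
          show i + 1 + (p - 1 - i) = p from by omega]
    _ = p • Matrix.trace (Amat n ^ p * Bmat n ^ q) := by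
        rw [Finset.sum_const, Finset.card_range]

/-- Derivative of `tr(A^p B^q)` in the `Y`-direction, contracted with `B`. -/
lemma main_inr (hn : 1 ≤ n) (p q : ℕ) :
    ∑ a : Fin n, ∑ b : Fin n,
      MvPolynomial.pderiv (Sum.inr (a, b)) (Matrix.trace (Amat n ^ p * Bmat n ^ q))
        * Bmat n a b
      = q • Matrix.trace (Amat n ^ p * Bmat n ^ q) := by
  have hder : ∀ a b : Fin n,
      MvPolynomial.pderiv (Sum.inr (a, b)) (Matrix.trace (Amat n ^ p * Bmat n ^ q))
        = ∑ i ∈ Finset.range q,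
            Matrix.trace ((Amat n ^ p * Bmat n ^ i) * (Matrix.single a b 1
              - (MvPolynomial.C ((n : ℂ)⁻¹) * (1 : Matrix (Fin n) (Fin n) (PolyFun n)) a b) •
                  (1 : Matrix (Fin n) (Fin n) (PolyFun n)))
              * Bmat n ^ (q - 1 - i)) := by
    intro a b
    rw [pderiv_trace, mder_mul, mder_pow_eq_zero (mder_A_inr (a, b)) p, Matrix.zero_mul,
      zero_add, mder_pow, mder_B_inr, Finset.mul_sum, Matrix.trace_sum]
    refine Finset.sum_congr rfl fun i _ => ?_
    rw [← Matrix.mul_assoc, ← Matrix.mul_assoc]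
  calc ∑ a : Fin n, ∑ b : Fin n,
      MvPolynomial.pderiv (Sum.inr (a, b)) (Matrix.trace (Amat n ^ p * Bmat n ^ q))
        * Bmat n a b
      = ∑ i ∈ Finset.range q, ∑ a : Fin n, ∑ b : Fin n,
          Matrix.trace ((Amat n ^ p * Bmat n ^ i) * (Matrix.single a b 1
            - (MvPolynomial.C ((n : ℂ)⁻¹) * (1 : Matrix (Fin n) (Fin n) (PolyFun n)) a b) •
                (1 : Matrix (Fin n) (Fin n) (PolyFun n)))
            * Bmat n ^ (q - 1 - i)) * Bmat n a b := by
        refine Eq.trans ?_ (sum_sum_range_comm _ _)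
        refine Finset.sum_congr rfl fun a _ => Finset.sum_congr rfl fun b _ => ?_
        rw [hder a b, Finset.sum_mul]
    _ = ∑ i ∈ Finset.range q, Matrix.trace (Amat n ^ p * Bmat n ^ q) := by
        refine Finset.sum_congr rfl fun i hi => ?_
        rw [Finset.mem_range] at hi
        rw [sum_core _ _ _ (trace_Bmat hn)]
        rw [Matrix.mul_assoc, Matrix.mul_assoc, ← pow_succ, Matrix.trace_mul_comm,
          Matrix.mul_assoc, ← pow_add, show i + 1 + (q - 1 - i) = q from by omega]
    _ = q • Matrix.trace (Amat n ^ p * Bmat n ^ q) := by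
        rw [Finset.sum_const, Finset.card_range]

/-- Derivatives of `tr(AB)`. -/
lemma pderiv_inr_trAB11 (hn : 1 ≤ n) (a b : Fin n) :
    MvPolynomial.pderiv (Sum.inr (a, b)) (trAB n 1 1) = Amat n b a := by
  rw [trAB, pow_one, pow_one, pderiv_trace, mder_mul, mder_A_inr, Matrix.zero_mul, zero_add,
    mder_B_inr, Matrix.mul_sub, Matrix.trace_sub, trace_mul_single,
    Matrix.mul_smul, Matrix.mul_one, Matrix.trace_smul, smul_eq_mul, trace_Amat hn,
    mul_zero, sub_zero]

lemma pderiv_inl_trAB11 (hn : 1 ≤ n) (a b : Fin n) :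
    MvPolynomial.pderiv (Sum.inl (a, b)) (trAB n 1 1) = Bmat n b a := by
  rw [trAB, pow_one, pow_one, pderiv_trace, mder_mul, mder_B_inl, Matrix.mul_zero, add_zero,
    mder_A_inl, Matrix.sub_mul, Matrix.trace_sub, Matrix.trace_mul_comm, trace_mul_single,
    Matrix.smul_mul, Matrix.one_mul, Matrix.trace_smul, smul_eq_mul,
    trace_Bmat hn, mul_zero, sub_zero]

/-- The polynomial identity. -/
lemma bracket_eq (hn : 1 ≤ n) (p q : ℕ) :
    pbracket (trAB n p q) (trAB n 1 1)
      = MvPolynomial.C ((p : ℂ) - (q : ℂ)) * trAB n p q := by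
  have h1 : pbracket (trAB n p q) (trAB n 1 1)
      = (∑ a : Fin n, ∑ b : Fin n,
          MvPolynomial.pderiv (Sum.inl (a, b)) (trAB n p q) * Amat n a b)
        - ∑ a : Fin n, ∑ b : Fin n,
            MvPolynomial.pderiv (Sum.inr (a, b)) (trAB n p q) * Bmat n a b := by
    rw [pbracket, ← Finset.sum_sub_distrib]
    refine Finset.sum_congr rfl fun a _ => ?_
    rw [← Finset.sum_sub_distrib]
    refine Finset.sum_congr rfl fun b _ => ?_
    rw [pderiv_inr_trAB11 hn, pderiv_inl_trAB11 hn]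
  rw [h1, trAB, main_inl hn, main_inr hn]
  rw [nsmul_eq_mul, nsmul_eq_mul, ← sub_mul]
  congr 1
  rw [map_sub, map_natCast, map_natCast]

end Stmt3Aux

/-- `{tr A^j B^k, tr(AB)} = (j − k) tr(A^j B^k)` identically on
`M_n(ℂ) × M_n(ℂ)`, for all `j, k ≥ 0`. -/
theorem stmt_3 (n : ℕ) (hn : 1 ≤ n) (j k : ℕ) (X Y : Matrix (Fin n) (Fin n) ℂ) :
    evalP X Y (pbracket (trAB n j k) (trAB n 1 1))
      = evalP X Y (MvPolynomial.C ((j : ℂ) - (k : ℂ)) * trAB n j k) := by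
  rw [Stmt3Aux.bracket_eq hn j k]
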